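/- Let p be an odd prime and let i be a nonnegative integer. Then St^{(i,0)}(Q_{2,1}) = Q_{2,1}^p if i = p²−p; St^{(i,0)}(Q_{2,1}) = (−1)^k·C(k+1,r)·Q_{2,0}^{r}·Q_{2,1}^{k+1−r} if i = kp+r with integers 0 ≤ r < p, 0 ≤ k and r ≤ k+1 ≤ p; and St^{(i,0)}(Q_{2,1}) = 0 otherwise. (Here C(k+1,r) denotes the binomial coefficient reduced mod p; the two listed cases agree when both apply.) -/

import Mathlib

open MvPolynomial Finset

/-- The total Steenrod-Milnor operation `φ : R → R[t₁,t₂]`,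
sending `y_k ↦ y_k + y_k^p t₁ + y_k^{p²} t₂`. Here `R = F_p[y₁,y₂]`
and `R[t₁,t₂]` is modelled as `MvPolynomial (Fin 2) R`. -/
noncomputable def phi (p : ℕ) :
    MvPolynomial (Fin 2) (ZMod p) →ₐ[ZMod p]
      MvPolynomial (Fin 2) (MvPolynomial (Fin 2) (ZMod p)) :=
  aeval (fun k => C (X k) + C (X k ^ p) * X 0 + C (X k ^ (p ^ 2)) * X 1)

/-- The Steenrod-Milnor operation `St^{(i,j)}` : the coefficient of
`t₁^i t₂^j` in `φ f`. -/
noncomputable def St (p i j : ℕ) (f : MvPolynomial (Fin 2) (ZMod p)) :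
    MvPolynomial (Fin 2) (ZMod p) :=
  coeff (Finsupp.single (0 : Fin 2) i + Finsupp.single (1 : Fin 2) j) (phi p f)

/-- `L₂ = y₁ y₂^p - y₁^p y₂`. -/
noncomputable def L2 (p : ℕ) : MvPolynomial (Fin 2) (ZMod p) :=
  X 0 * X 1 ^ p - X 0 ^ p * X 1

/-- `L_{2,0} = y₁^p y₂^{p²} - y₁^{p²} y₂^p`. -/
noncomputable def L20 (p : ℕ) : MvPolynomial (Fin 2) (ZMod p) :=
  X 0 ^ p * X 1 ^ (p ^ 2) - X 0 ^ (p ^ 2) * X 1 ^ p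

/-- `L_{2,1} = y₁ y₂^{p²} - y₁^{p²} y₂`. -/
noncomputable def L21 (p : ℕ) : MvPolynomial (Fin 2) (ZMod p) :=
  X 0 * X 1 ^ (p ^ 2) - X 0 ^ (p ^ 2) * X 1

/-! ### Auxiliary machinery -/

/-- The one-variable total Steenrod operation `f ↦ f(y + y^p t)`. -/
noncomputable def psi (p : ℕ) :
    MvPolynomial (Fin 2) (ZMod p) →ₐ[ZMod p]
      Polynomial (MvPolynomial (Fin 2) (ZMod p)) :=
  aeval (fun k => Polynomial.C (X k) + Polynomial.C (X k ^ p) * Polynomial.X)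

/-- Projection `R[t₁,t₂] → R[t]`, `t₁ ↦ t`, `t₂ ↦ 0`. -/
noncomputable def pr (p : ℕ) :
    MvPolynomial (Fin 2) (MvPolynomial (Fin 2) (ZMod p)) →+*
      Polynomial (MvPolynomial (Fin 2) (ZMod p)) :=
  eval₂Hom Polynomial.C ![Polynomial.X, 0]

lemma single_eq_iff (i : ℕ) (u : Fin 2 →₀ ℕ) (h1 : u 1 = 0) :
    Finsupp.single (0 : Fin 2) i = u ↔ i = u 0 := by
  constructor
  · intro h; rw [← h]; simp
  · intro h; ext a
    match a with
    | 0 => simp [h]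
    | 1 => simp [h1]

lemma coeff_pr' (p i : ℕ) (g : MvPolynomial (Fin 2) (MvPolynomial (Fin 2) (ZMod p))) :
    (pr p g).coeff i = coeff (Finsupp.single (0 : Fin 2) i) g := by
  induction g using MvPolynomial.induction_on' with
  | monomial u a =>
      rw [pr, coe_eval₂Hom, eval₂_monomial, Finsupp.prod_pow, Fin.prod_univ_two]
      simp only [Matrix.cons_val_zero, Matrix.cons_val_one, Matrix.head_cons]
      rcases Nat.eq_zero_or_pos (u 1) with h1 | h1
      · rw [h1, pow_zero, mul_one, Polynomial.coeff_C_mul_X_pow,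
          MvPolynomial.coeff_monomial]
        by_cases h : i = u 0
        · rw [if_pos h, if_pos ((single_eq_iff i u h1).mpr h).symm]
        · rw [if_neg h, if_neg (fun hc => h ((single_eq_iff i u h1).mp hc.symm))]
      · rw [zero_pow h1.ne', mul_zero, mul_zero, Polynomial.coeff_zero,
          MvPolynomial.coeff_monomial, if_neg]
        intro h
        rw [h] at h1
        simp at h1
  | add f g hf hg => simp [map_add, MvPolynomial.coeff_add, hf, hg]

lemma pr_phi (p : ℕ) (f : MvPolynomial (Fin 2) (ZMod p)) :
    pr p (phi p f) = psi p f := by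
  have : (pr p).comp (phi p).toRingHom = (psi p).toRingHom := by
    apply MvPolynomial.ringHom_ext
    · intro r
      simp [pr, phi, psi, MvPolynomial.algHom_C]
    · intro k
      simp [pr, phi, psi]
  exact RingHom.congr_fun this f

lemma St_eq_coeff (p i : ℕ) (f : MvPolynomial (Fin 2) (ZMod p)) :
    St p i 0 f = (psi p f).coeff i := by
  rw [St, Finsupp.single_zero, add_zero, ← coeff_pr', pr_phi]

section Prime

variable (p : ℕ) [Fact p.Prime]

lemma L20_eq : L20 p = L2 p ^ p := by
  rw [L20, L2, sub_pow_char]; ring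

lemma L2_ne : L2 p ≠ 0 := by
  intro h
  have h2 := congrArg (aeval ![(1 : Polynomial (ZMod p)), Polynomial.X]) h
  rw [L2] at h2
  simp only [map_sub, map_mul, map_pow, map_zero, aeval_X] at h2
  simp only [Matrix.cons_val_zero, Matrix.cons_val_one, Matrix.head_cons, one_pow, one_mul] at h2
  have h3 := congrArg (Polynomial.coeff · 1) h2
  have hp2 : 2 ≤ p := (Fact.out : p.Prime).two_le
  simp only [Polynomial.coeff_sub, Polynomial.coeff_X_pow, Polynomial.coeff_zero] at h3
  rw [if_neg (by omega), Polynomial.coeff_X_one] at h3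
  simp at h3

lemma psi_L2 : psi p (L2 p) =
    Polynomial.C (L2 p) + Polynomial.C (L21 p) * Polynomial.X ^ p
      + Polynomial.C (L2 p ^ p) * Polynomial.X ^ (p + 1) := by
  have h : ∀ k : Fin 2, psi p (X k) = Polynomial.C (X k) + Polynomial.C (X k ^ p) * Polynomial.X := by
    intro k; rw [psi, MvPolynomial.aeval_X]
  conv_lhs => rw [L2, map_sub, map_mul, map_mul, map_pow, map_pow, h, h]
  rw [L2, L21]
  simp only [add_pow_char, sub_pow_char, mul_pow, map_sub, map_mul, map_pow, Polynomial.C_pow]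
  ring

noncomputable def Apoly (p : ℕ) : MvPolynomial (Fin 2) (ZMod p) :=
  X 0 * X 1 ^ (p ^ 3) - X 0 ^ (p ^ 3) * X 1

lemma psi_L21 : psi p (L21 p) =
    Polynomial.C (L21 p) + Polynomial.C (L2 p ^ p) * Polynomial.X
      + Polynomial.C (Apoly p) * Polynomial.X ^ (p ^ 2)
      + Polynomial.C (L21 p ^ p) * Polynomial.X ^ (p ^ 2 + 1) := by
  have h : ∀ k : Fin 2, psi p (X k) = Polynomial.C (X k) + Polynomial.C (X k ^ p) * Polynomial.X := by
    intro k; rw [psi, MvPolynomial.aeval_X]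
  conv_lhs => rw [L21, map_sub, map_mul, map_mul, map_pow, map_pow, h, h]
  rw [L21, L2, Apoly]
  simp only [add_pow_char_pow, add_pow_char, sub_pow_char, mul_pow, map_sub, map_mul, map_pow,
    Polynomial.C_pow]
  ring

lemma Apoly_L2 : Apoly p * L2 p ^ p = L21 p ^ (p + 1) - L2 p ^ (p ^ 2 + 1) := by
  have c2 : L2 p ^ p = X 0 ^ p * X 1 ^ (p * p) - X 0 ^ (p * p) * X 1 ^ p := by
    rw [L2, sub_pow_char]; ring
  have c21 : L21 p ^ p = X 0 ^ p * X 1 ^ (p ^ 2 * p) - X 0 ^ (p ^ 2 * p) * X 1 ^ p := by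
    rw [L21, sub_pow_char]; ring
  have c22 : L2 p ^ p ^ 2 = X 0 ^ p ^ 2 * X 1 ^ (p * p ^ 2) - X 0 ^ (p * p ^ 2) * X 1 ^ p ^ 2 := by
    rw [L2, sub_pow_char_pow]; ring
  rw [pow_succ, pow_succ, c2, c21, c22, Apoly, L2, L21]
  ring

lemma psi_L2_ne : psi p (L2 p) ≠ 0 := by
  intro h
  have h0 : (psi p (L2 p)).coeff 0 = L2 p := by
    have hp0 : p ≠ 0 := (Fact.out : p.Prime).ne_zero
    rw [psi_L2]
    simp only [Polynomial.coeff_add, Polynomial.coeff_C_mul_X_pow]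
    rw [if_neg (by omega), if_neg (by omega)]
    simp
  rw [h, Polynomial.coeff_zero] at h0
  exact L2_ne p h0.symm

lemma psi_Q1 (hodd : Odd p) (Q0 Q1 : MvPolynomial (Fin 2) (ZMod p))
    (hQ0 : Q0 * L2 p = L20 p) (hQ1 : Q1 * L2 p = L21 p) :
    psi p Q1 =
      (∑ m ∈ Finset.range p, (-1) ^ m *
          (Polynomial.C Q1 + Polynomial.C Q0 * Polynomial.X) ^ (m + 1) *
          Polynomial.X ^ (p * m))
        - Polynomial.C (Q0 ^ p) * Polynomial.X ^ (p ^ 2) := by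
  have hQ0' : Q0 * L2 p = L2 p ^ p := hQ0.trans (L20_eq p)
  set N : Polynomial (MvPolynomial (Fin 2) (ZMod p)) :=
    Polynomial.C Q1 + Polynomial.C Q0 * Polynomial.X with hN
  have hA : Apoly p = (Q1 ^ (p + 1) - Q0 ^ p) * L2 p := by
    have h1 : L21 p ^ (p + 1) = Q1 ^ (p + 1) * L2 p ^ (p + 1) := by rw [← hQ1]; ring
    have h2 : L2 p ^ (p ^ 2 + 1) = Q0 ^ p * L2 p ^ (p + 1) := by
      have h3 : L2 p ^ (p ^ 2 + 1) = (Q0 * L2 p) ^ p * L2 p := by rw [hQ0']; ring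
      rw [h3]; ring
    have key : Apoly p * L2 p ^ p = ((Q1 ^ (p + 1) - Q0 ^ p) * L2 p) * L2 p ^ p := by
      rw [Apoly_L2, h1, h2]; ring
    exact mul_right_cancel₀ (pow_ne_zero _ (L2_ne p)) key
  have hD : psi p (L2 p) = Polynomial.C (L2 p) * (1 + N * Polynomial.X ^ p) := by
    rw [psi_L2 p, hN, ← hQ1, ← hQ0']
    simp only [map_mul]
    ring
  have tel : (∑ m ∈ Finset.range p, (-1) ^ m * N ^ (m + 1) * Polynomial.X ^ (p * m))
      * (1 + N * Polynomial.X ^ p)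
      = N + N ^ (p + 1) * Polynomial.X ^ (p * p) := by
    rw [Finset.sum_mul]
    have step : ∀ m ∈ Finset.range p,
        ((-1) ^ m * N ^ (m + 1) * Polynomial.X ^ (p * m)) * (1 + N * Polynomial.X ^ p)
          = ((-1) ^ m * N ^ (m + 1) * Polynomial.X ^ (p * m))
            - ((-1) ^ (m + 1) * N ^ (m + 1 + 1) * Polynomial.X ^ (p * (m + 1))) := by
      intro m _
      ring
    rw [Finset.sum_congr rfl step,
      Finset.sum_range_sub' (fun m => (-1) ^ m * N ^ (m + 1) * Polynomial.X ^ (p * m)) p]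
    have hneg : ((-1 : Polynomial (MvPolynomial (Fin 2) (ZMod p)))) ^ p = -1 :=
      Odd.neg_one_pow (α := Polynomial (MvPolynomial (Fin 2) (ZMod p))) hodd
    rw [hneg]
    ring
  have hNp : N ^ p = Polynomial.C (Q1 ^ p) + Polynomial.C (Q0 ^ p) * Polynomial.X ^ p := by
    rw [hN, add_pow_char, mul_pow, ← Polynomial.C_pow, ← Polynomial.C_pow]
  have hmul : ((∑ m ∈ Finset.range p, (-1) ^ m * N ^ (m + 1) * Polynomial.X ^ (p * m))
        - Polynomial.C (Q0 ^ p) * Polynomial.X ^ (p ^ 2)) * psi p (L2 p)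
      = psi p (L21 p) := by
    rw [hD, psi_L21 p, hA, ← hQ1, ← hQ0']
    rw [sub_mul, mul_comm (Polynomial.C (L2 p)) (1 + N * Polynomial.X ^ p), ← mul_assoc, tel]
    have hL21p : (Q1 * L2 p) ^ p = Q1 ^ p * (Q0 * L2 p) := by
      rw [hQ0']; ring
    rw [hL21p]
    rw [pow_succ N p, hNp, hN]
    simp only [map_sub, map_mul, map_pow, Polynomial.C_pow]
    ring
  have key : psi p Q1 * psi p (L2 p)
      = ((∑ m ∈ Finset.range p, (-1) ^ m * N ^ (m + 1) * Polynomial.X ^ (p * m))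
        - Polynomial.C (Q0 ^ p) * Polynomial.X ^ (p ^ 2)) * psi p (L2 p) := by
    rw [← map_mul, hQ1, hmul]
  exact mul_right_cancel₀ (psi_L2_ne p) key

lemma term_expand (Q0 Q1 : MvPolynomial (Fin 2) (ZMod p)) (m : ℕ) :
    ((-1 : Polynomial (MvPolynomial (Fin 2) (ZMod p))) ^ m *
        (Polynomial.C Q1 + Polynomial.C Q0 * Polynomial.X) ^ (m + 1) * Polynomial.X ^ (p * m))
      = ∑ r ∈ Finset.range (m + 2),
          Polynomial.C ((-1) ^ m * ((m + 1).choose r : MvPolynomial (Fin 2) (ZMod p))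
            * Q0 ^ r * Q1 ^ (m + 1 - r)) * Polynomial.X ^ (p * m + r) := by
  rw [add_comm (Polynomial.C Q1), add_pow, Finset.mul_sum, Finset.sum_mul,
    show m + 1 + 1 = m + 2 from rfl]
  apply Finset.sum_congr rfl
  intro r _
  simp only [map_mul, map_pow, map_natCast, map_neg, map_one, mul_pow, pow_add]
  ring

lemma coeff_psi_Q1 (hodd : Odd p) (Q0 Q1 : MvPolynomial (Fin 2) (ZMod p))
    (hQ0 : Q0 * L2 p = L20 p) (hQ1 : Q1 * L2 p = L21 p) (i : ℕ) :
    (psi p Q1).coeff i =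
      (∑ m ∈ Finset.range p, ∑ r ∈ Finset.range (m + 2),
        if i = p * m + r then
          ((-1) ^ m * ((m + 1).choose r : MvPolynomial (Fin 2) (ZMod p))
            * Q0 ^ r * Q1 ^ (m + 1 - r)) else 0)
      - (if i = p ^ 2 then Q0 ^ p else 0) := by
  rw [psi_Q1 p hodd Q0 Q1 hQ0 hQ1, Polynomial.coeff_sub, Polynomial.finset_sum_coeff]
  congr 1
  · apply Finset.sum_congr rfl
    intro m _
    rw [term_expand, Polynomial.finset_sum_coeff]
    apply Finset.sum_congr rfl
    intro r _
    rw [Polynomial.coeff_C_mul_X_pow]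
  · rw [Polynomial.coeff_C_mul_X_pow]

end Prime

theorem st_i0_Q21 (p : ℕ) (hp : p.Prime) (hodd : Odd p)
    (Q0 Q1 : MvPolynomial (Fin 2) (ZMod p))
    (hQ0 : Q0 * L2 p = L20 p) (hQ1 : Q1 * L2 p = L21 p)
    (i : ℕ) :
    (i = p ^ 2 - p → St p i 0 Q1 = Q1 ^ p) ∧
    (∀ k r : ℕ, r < p → r ≤ k + 1 → k + 1 ≤ p → i = k * p + r →
      St p i 0 Q1 = (-1 : MvPolynomial (Fin 2) (ZMod p)) ^ k *
        C (((k + 1).choose r : ZMod p)) * Q0 ^ r * Q1 ^ (k + 1 - r)) ∧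
    ((i ≠ p ^ 2 - p ∧ ∀ k r : ℕ, r < p → r ≤ k + 1 → k + 1 ≤ p → i ≠ k * p + r) →
      St p i 0 Q1 = 0) := by
  haveI : Fact p.Prime := ⟨hp⟩
  have hpp : p ^ 2 = p * p := by ring
  have hp1 : 1 ≤ p := hp.one_lt.le.trans' (by omega)
  have case2 : ∀ k r : ℕ, r < p → r ≤ k + 1 → k + 1 ≤ p → i = k * p + r →
      St p i 0 Q1 = (-1 : MvPolynomial (Fin 2) (ZMod p)) ^ k *
        C (((k + 1).choose r : ZMod p)) * Q0 ^ r * Q1 ^ (k + 1 - r) := by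
    intro k r hrp hrk hkp hi
    rw [St_eq_coeff, coeff_psi_Q1 p hodd Q0 Q1 hQ0 hQ1 i]
    have hkP : k < p := by omega
    have hne : i ≠ p ^ 2 := by
      have h1 : k * p ≤ (p - 1) * p := Nat.mul_le_mul_right p (by omega)
      have h2 : (p - 1) * p + p = p * p := by
        have h3 : p - 1 + 1 = p := by omega
        calc (p - 1) * p + p = (p - 1 + 1) * p := by ring
          _ = p * p := by rw [h3]
      omega
    rw [if_neg hne, sub_zero]
    have hside : ∀ m ∈ Finset.range p, m ≠ k →
        (∑ r' ∈ Finset.range (m + 2), if i = p * m + r' then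
          ((-1) ^ m * ((m + 1).choose r' : MvPolynomial (Fin 2) (ZMod p))
            * Q0 ^ r' * Q1 ^ (m + 1 - r')) else 0) = 0 := by
      intro m hm hmk
      apply Finset.sum_eq_zero
      intro r' hr'
      rw [if_neg]
      rw [hi]
      have hr'2 : r' < m + 2 := Finset.mem_range.mp hr'
      have hmp : m < p := Finset.mem_range.mp hm
      rcases Nat.lt_or_ge m k with h | h
      · have e1 : p * (m + 1) ≤ p * k := Nat.mul_le_mul_left p h
        have e2 : p * (m + 1) = p * m + p := by ring
        have e3 : p * k = k * p := by ring
        omega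
      · have h' : k < m := by omega
        have e1 : p * (k + 1) ≤ p * m := Nat.mul_le_mul_left p h'
        have e2 : p * (k + 1) = p * k + p := by ring
        have e3 : p * k = k * p := by ring
        omega
    rw [Finset.sum_eq_single_of_mem k (Finset.mem_range.mpr hkP) hside]
    have hcong : (∑ r' ∈ Finset.range (k + 2), if i = p * k + r' then
          ((-1) ^ k * ((k + 1).choose r' : MvPolynomial (Fin 2) (ZMod p))
            * Q0 ^ r' * Q1 ^ (k + 1 - r')) else 0)
        = ∑ r' ∈ Finset.range (k + 2), if r' = r then
          ((-1) ^ k * ((k + 1).choose r' : MvPolynomial (Fin 2) (ZMod p))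
            * Q0 ^ r' * Q1 ^ (k + 1 - r')) else 0 := by
      apply Finset.sum_congr rfl
      intro r' _
      apply if_congr _ rfl rfl
      rw [hi, mul_comm p k]
      omega
    rw [hcong, Finset.sum_ite_eq' (Finset.range (k + 2)) r,
      if_pos (Finset.mem_range.mpr (by omega))]
    rw [show ((((k + 1).choose r : ℕ)) : MvPolynomial (Fin 2) (ZMod p))
      = C (((k + 1).choose r : ZMod p)) from (map_natCast (C : ZMod p →+* _) _).symm]
  refine ⟨?_, case2, ?_⟩
  · intro hi
    have hsub : (p - 1) * p = p ^ 2 - p := by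
      rw [Nat.sub_mul, one_mul, ← hpp]
    have h0 : i = (p - 1) * p + 0 := by omega
    have h := case2 (p - 1) 0 hp.pos (by omega) (by omega) h0
    rw [h]
    have e : p - 1 + 1 = p := by omega
    rw [e, Nat.choose_zero_right]
    have hev : Even (p - 1) := Nat.Odd.sub_odd hodd odd_one
    have hneg : ((-1 : MvPolynomial (Fin 2) (ZMod p))) ^ (p - 1) = 1 :=
      Even.neg_one_pow (α := MvPolynomial (Fin 2) (ZMod p)) hev
    rw [hneg]
    simp
  · rintro ⟨hi1, hi2⟩
    rw [St_eq_coeff, coeff_psi_Q1 p hodd Q0 Q1 hQ0 hQ1 i]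
    by_cases hip : i = p ^ 2
    · rw [if_pos hip]
      have e3 : p * (p - 1) + p = p * p := by
        have h3 : p - 1 + 1 = p := by omega
        calc p * (p - 1) + p = p * (p - 1 + 1) := by ring
          _ = p * p := by rw [h3]
      have hside : ∀ m ∈ Finset.range p, m ≠ p - 1 →
          (∑ r' ∈ Finset.range (m + 2), if i = p * m + r' then
            ((-1) ^ m * ((m + 1).choose r' : MvPolynomial (Fin 2) (ZMod p))
              * Q0 ^ r' * Q1 ^ (m + 1 - r')) else 0) = 0 := by
        intro m hm hmk
        apply Finset.sum_eq_zero
        intro r' hr'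
        rw [if_neg]
        have hr'2 : r' < m + 2 := Finset.mem_range.mp hr'
        have hmp : m < p := Finset.mem_range.mp hm
        have e1 : p * (m + 1) = p * m + p := by ring
        have e2 : p * (m + 1) ≤ p * (p - 1) := Nat.mul_le_mul_left p (by omega)
        omega
      rw [Finset.sum_eq_single_of_mem (p - 1) (Finset.mem_range.mpr (by omega)) hside]
      have hcong : (∑ r' ∈ Finset.range (p - 1 + 2), if i = p * (p - 1) + r' then
            ((-1) ^ (p - 1) * ((p - 1 + 1).choose r' : MvPolynomial (Fin 2) (ZMod p))
              * Q0 ^ r' * Q1 ^ (p - 1 + 1 - r')) else 0)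
          = ∑ r' ∈ Finset.range (p - 1 + 2), if r' = p then
            ((-1) ^ (p - 1) * ((p - 1 + 1).choose r' : MvPolynomial (Fin 2) (ZMod p))
              * Q0 ^ r' * Q1 ^ (p - 1 + 1 - r')) else 0 := by
        apply Finset.sum_congr rfl
        intro r' _
        apply if_congr _ rfl rfl
        rw [hip, hpp]
        omega
      rw [hcong, Finset.sum_ite_eq' (Finset.range (p - 1 + 2)) p,
        if_pos (Finset.mem_range.mpr (by omega))]
      have e : p - 1 + 1 = p := by omega
      rw [e, Nat.choose_self, Nat.sub_self, pow_zero, Nat.cast_one]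
      have hev : Even (p - 1) := Nat.Odd.sub_odd hodd odd_one
      have hneg : ((-1 : MvPolynomial (Fin 2) (ZMod p))) ^ (p - 1) = 1 :=
        Even.neg_one_pow (α := MvPolynomial (Fin 2) (ZMod p)) hev
      rw [hneg]
      ring
    · rw [if_neg hip, sub_zero]
      apply Finset.sum_eq_zero
      intro m hm
      apply Finset.sum_eq_zero
      intro r' hr'
      rw [if_neg]
      intro hcon
      have hmp : m < p := Finset.mem_range.mp hm
      have hr'2 : r' < m + 2 := Finset.mem_range.mp hr'
      rcases Nat.lt_or_ge r' p with h | h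
      · exact hi2 m r' h (by omega) (by omega) (by rw [hcon, mul_comm])
      · apply hip
        have hm1 : m + 1 = p := by omega
        have e3 : p * m + p = p * p := by
          calc p * m + p = p * (m + 1) := by ring
            _ = p * p := by rw [hm1]
        omega
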